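/- Let M ∈ R^{n×n} have rank r with reduced SVD M = UΣV^T, let Ω ⊆ [n]×[n] be given, and suppose p ≥ 1/n. Then M is the unique optimal solution of the problem: minimize ‖X‖_* subject to X_{ij} = M_{ij} for (i,j) ∈ Ω, provided the following conditions hold: (1) ‖P_T R_Ω P_T − P_T‖_op ≤ 1/2; (2) there exists a matrix Y ∈ R^{n×n} with P_Ω(Y) = Y such that (a) ‖P_{T⊥}(Y)‖ ≤ 1/2 and (b) ‖P_T(Y) − UV^T‖_F ≤ 1/(4n). -/

import Mathlib

open MeasureTheory Matrix

noncomputable section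

/-- Frobenius norm of a real matrix. -/
def frobNorm {m n : ℕ} (X : Matrix (Fin m) (Fin n) ℝ) : ℝ :=
  Real.sqrt (∑ i, ∑ j, (X i j) ^ 2)

/-- Nuclear norm: sum of singular values (square roots of eigenvalues of XᵀX). -/
def nuclearNorm {m n : ℕ} (X : Matrix (Fin m) (Fin n) ℝ) : ℝ :=
  ∑ i, Real.sqrt ((show (Xᵀ * X).IsHermitian by
    rw [IsHermitian, conjTranspose_eq_transpose_of_trivial, transpose_mul,
      transpose_transpose]).eigenvalues i)

/-- Spectral norm: operator norm of the associated Euclidean linear map. -/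
def specNorm {m n : ℕ} (X : Matrix (Fin m) (Fin n) ℝ) : ℝ :=
  ‖(Matrix.toEuclideanLin X).toContinuousLinearMap‖

/-- Entrywise ℓ∞ norm. -/
def linf {m n : ℕ} (X : Matrix (Fin m) (Fin n) ℝ) : ℝ := ⨆ i, ⨆ j, |X i j|

/-- ℓ∞,2 norm: maximum of the largest row and column ℓ₂ norms. -/
def linf2 {n : ℕ} (X : Matrix (Fin n) (Fin n) ℝ) : ℝ :=
  max (⨆ i, Real.sqrt (∑ j, (X i j) ^ 2)) (⨆ j, Real.sqrt (∑ i, (X i j) ^ 2))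

/-- Operator norm (w.r.t. the Frobenius norm) of a map on n×n matrices. -/
def opNormMap {n : ℕ} (A : Matrix (Fin n) (Fin n) ℝ → Matrix (Fin n) (Fin n) ℝ) : ℝ :=
  ⨆ Z : {Z : Matrix (Fin n) (Fin n) ℝ // frobNorm Z ≤ 1}, frobNorm (A Z.1)

/-- P_Ω for a Boolean sample ω. -/
def projB {n : ℕ} (ω : Fin n × Fin n → Bool) (Z : Matrix (Fin n) (Fin n) ℝ) :
    Matrix (Fin n) (Fin n) ℝ := fun i j => if ω (i, j) then Z i j else 0

open Classical in
/-- P_Ω for a set Ω of indices. -/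
def projS {n : ℕ} (Ω : Set (Fin n × Fin n)) (Z : Matrix (Fin n) (Fin n) ℝ) :
    Matrix (Fin n) (Fin n) ℝ := fun i j => if (i, j) ∈ Ω then Z i j else 0

/-- The tangent-space projection P_T determined by U and V. -/
def projT {n r : ℕ} (U V : Matrix (Fin n) (Fin r) ℝ) (Z : Matrix (Fin n) (Fin n) ℝ) :
    Matrix (Fin n) (Fin n) ℝ :=
  U * Uᵀ * Z + Z * V * Vᵀ - U * Uᵀ * Z * V * Vᵀ

/-- Bernoulli(p) measure on Bool. -/
def bern (p : ℝ) : Measure Bool :=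
  ENNReal.ofReal p • Measure.dirac true + ENNReal.ofReal (1 - p) • Measure.dirac false

/-- Product Bernoulli(p) measure on index samples: each (i,j) observed independently
with probability p. -/
def sampleMeasure (n : ℕ) (p : ℝ) : Measure (Fin n × Fin n → Bool) :=
  Measure.pi fun _ => bern p

/-- ℓ₂ norm of the i-th row of U, i.e. ‖Uᵀ e_i‖₂. -/
def rowNorm {n r : ℕ} (U : Matrix (Fin n) (Fin r) ℝ) (i : Fin n) : ℝ :=
  Real.sqrt (∑ k, (U i k) ^ 2)


-- ### Auxiliary development
def enorm {k : ℕ} (x : Fin k → ℝ) : ℝ := Real.sqrt (∑ i, x i ^ 2)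

lemma enorm_eq {k : ℕ} (x : Fin k → ℝ) :
    ‖(WithLp.equiv 2 (Fin k → ℝ)).symm x‖ = _root_.enorm x := by
  rw [EuclideanSpace.norm_eq]
  simp [_root_.enorm, sq_abs]

lemma enorm_eq' {k : ℕ} (x : Fin k → ℝ) : ‖WithLp.toLp 2 x‖ = _root_.enorm x := enorm_eq x

lemma norm_mulVec_le {m n : ℕ} (X : Matrix (Fin m) (Fin n) ℝ) (x : Fin n → ℝ) :
    _root_.enorm (X *ᵥ x) ≤ specNorm X * _root_.enorm x := by
  have h := (Matrix.toEuclideanLin X).toContinuousLinearMap.le_opNorm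
    ((WithLp.equiv 2 (Fin n → ℝ)).symm x)
  rw [LinearMap.coe_toContinuousLinearMap'] at h
  rw [Matrix.toEuclideanLin_apply] at h
  simpa [enorm_eq, enorm_eq', specNorm] using h

lemma specNorm_le_of_bound {m n : ℕ} (X : Matrix (Fin m) (Fin n) ℝ) {c : ℝ} (hc : 0 ≤ c)
    (h : ∀ x, _root_.enorm (X *ᵥ x) ≤ c * _root_.enorm x) : specNorm X ≤ c := by
  apply ContinuousLinearMap.opNorm_le_bound _ hc
  intro x
  rw [LinearMap.coe_toContinuousLinearMap']
  have := h ((WithLp.equiv 2 (Fin n → ℝ)) x)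
  rw [Matrix.toEuclideanLin_apply]
  have hx : ‖x‖ = _root_.enorm ((WithLp.equiv 2 (Fin n → ℝ)) x) := by
    rw [← enorm_eq]; simp
  rw [hx]
  simpa [enorm_eq, enorm_eq'] using this

lemma specNorm_nonneg {m n : ℕ} (X : Matrix (Fin m) (Fin n) ℝ) : 0 ≤ specNorm X :=
  norm_nonneg _

def ip {m n : ℕ} (A B : Matrix (Fin m) (Fin n) ℝ) : ℝ := ∑ i, ∑ j, A i j * B i j

lemma ip_comm {m n : ℕ} (A B : Matrix (Fin m) (Fin n) ℝ) : ip A B = ip B A := by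
  simp [ip, mul_comm]

lemma ip_eq_trace {m n : ℕ} (A B : Matrix (Fin m) (Fin n) ℝ) : ip A B = (Aᵀ * B).trace := by
  simp only [ip, Matrix.trace, Matrix.diag, Matrix.mul_apply, transpose_apply]
  exact Finset.sum_comm

lemma ip_mul_left {m n k : ℕ} (C : Matrix (Fin m) (Fin k) ℝ) (A : Matrix (Fin k) (Fin n) ℝ)
    (B : Matrix (Fin m) (Fin n) ℝ) : ip (C * A) B = ip A (Cᵀ * B) := by
  rw [ip_eq_trace, ip_eq_trace, transpose_mul, Matrix.mul_assoc]

lemma ip_mul_right {m n k : ℕ} (A : Matrix (Fin m) (Fin k) ℝ) (C : Matrix (Fin k) (Fin n) ℝ)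
    (B : Matrix (Fin m) (Fin n) ℝ) : ip (A * C) B = ip A (B * Cᵀ) := by
  rw [ip_eq_trace, ip_eq_trace, transpose_mul, Matrix.mul_assoc, Matrix.trace_mul_comm,
    Matrix.mul_assoc]

lemma ip_nonneg_self {m n : ℕ} (A : Matrix (Fin m) (Fin n) ℝ) : 0 ≤ ip A A := by
  apply Finset.sum_nonneg; intro i _; apply Finset.sum_nonneg; intro j _; exact mul_self_nonneg _

lemma frob_eq_sqrt_ip {m n : ℕ} (A : Matrix (Fin m) (Fin n) ℝ) :
    frobNorm A = Real.sqrt (ip A A) := by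
  simp [frobNorm, ip, sq]

lemma frob_nonneg {m n : ℕ} (A : Matrix (Fin m) (Fin n) ℝ) : 0 ≤ frobNorm A :=
  Real.sqrt_nonneg _

lemma frob_sq {m n : ℕ} (A : Matrix (Fin m) (Fin n) ℝ) : frobNorm A ^ 2 = ip A A := by
  rw [frob_eq_sqrt_ip, Real.sq_sqrt (ip_nonneg_self A)]

lemma abs_ip_le {m n : ℕ} (A B : Matrix (Fin m) (Fin n) ℝ) :
    |ip A B| ≤ frobNorm A * frobNorm B := by
  have h1 : ip A B = ∑ p : Fin m × Fin n, A p.1 p.2 * B p.1 p.2 := by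
    rw [ip]; exact (Fintype.sum_prod_type (f := fun p : Fin m × Fin n => A p.1 p.2 * B p.1 p.2)).symm
  have h2 := Finset.sum_mul_sq_le_sq_mul_sq Finset.univ (fun p : Fin m × Fin n => A p.1 p.2)
    (fun p : Fin m × Fin n => B p.1 p.2)
  have hA : ∑ p : Fin m × Fin n, A p.1 p.2 ^ 2 = frobNorm A ^ 2 := by
    rw [frob_sq, ip]; rw [show (∑ i, ∑ j, A i j * A i j) = ∑ p : Fin m × Fin n, A p.1 p.2 * A p.1 p.2 from (Fintype.sum_prod_type (f := fun p : Fin m × Fin n => A p.1 p.2 * A p.1 p.2)).symm]; simp [sq]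
  have hB : ∑ p : Fin m × Fin n, B p.1 p.2 ^ 2 = frobNorm B ^ 2 := by
    rw [frob_sq, ip]; rw [show (∑ i, ∑ j, B i j * B i j) = ∑ p : Fin m × Fin n, B p.1 p.2 * B p.1 p.2 from (Fintype.sum_prod_type (f := fun p : Fin m × Fin n => B p.1 p.2 * B p.1 p.2)).symm]; simp [sq]
  rw [hA, hB] at h2
  rw [h1]
  calc |∑ p : Fin m × Fin n, A p.1 p.2 * B p.1 p.2|
      = Real.sqrt (|∑ p : Fin m × Fin n, A p.1 p.2 * B p.1 p.2| ^ 2) :=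
        (Real.sqrt_sq (abs_nonneg _)).symm
    _ ≤ Real.sqrt ((frobNorm A * frobNorm B) ^ 2) := by
        apply Real.sqrt_le_sqrt; rw [sq_abs, mul_pow]; exact h2
    _ = frobNorm A * frobNorm B := Real.sqrt_sq (mul_nonneg (frob_nonneg A) (frob_nonneg B))

lemma ip_le {m n : ℕ} (A B : Matrix (Fin m) (Fin n) ℝ) :
    ip A B ≤ frobNorm A * frobNorm B := (le_abs_self _).trans (abs_ip_le A B)

lemma frob_eq_zero {m n : ℕ} {A : Matrix (Fin m) (Fin n) ℝ} (h : frobNorm A = 0) : A = 0 := by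
  have : ip A A = 0 := by
    have := frob_sq A; rw [h] at this; linarith [this.symm]
  ext i j
  have hs : ∀ p ∈ (Finset.univ : Finset (Fin m)), (0:ℝ) ≤ ∑ j, A p j * A p j :=
    fun p _ => Finset.sum_nonneg fun j _ => mul_self_nonneg _
  have h2 : ∑ j, A i j * A i j = 0 := by
    by_contra hne
    have hpos : 0 < ∑ j, A i j * A i j := lt_of_le_of_ne (hs i (Finset.mem_univ i)) (Ne.symm hne)
    have : 0 < ip A A := by
      rw [ip]
      exact Finset.sum_pos' hs ⟨i, Finset.mem_univ i, hpos⟩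
    linarith
  have h3 : ∀ j ∈ (Finset.univ : Finset (Fin n)), A i j * A i j = 0 := by
    intro j _
    have := (Finset.sum_eq_zero_iff_of_nonneg (fun j _ => mul_self_nonneg (A i j))).mp h2
    exact this j (Finset.mem_univ j)
  have := h3 j (Finset.mem_univ j)
  simpa [mul_self_eq_zero] using this

variable {n : ℕ}

lemma isHerm_tmul {m k : ℕ} (X : Matrix (Fin m) (Fin k) ℝ) : (Xᵀ * X).IsHermitian := by
  rw [IsHermitian, conjTranspose_eq_transpose_of_trivial, transpose_mul,
    transpose_transpose]

def svdMu (X : Matrix (Fin n) (Fin n) ℝ) (i : Fin n) : ℝ :=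
  (isHerm_tmul X).eigenvalues i
def svdV (X : Matrix (Fin n) (Fin n) ℝ) (i : Fin n) : Fin n → ℝ :=
  ⇑((isHerm_tmul X).eigenvectorBasis i)
def svdU (X : Matrix (Fin n) (Fin n) ℝ) (i : Fin n) : Fin n → ℝ :=
  if svdMu X i = 0 then 0 else (Real.sqrt (svdMu X i))⁻¹ • (X *ᵥ svdV X i)

lemma svdMu_nonneg (X : Matrix (Fin n) (Fin n) ℝ) (i : Fin n) : 0 ≤ svdMu X i := by
  have h : (Xᵀ * X).PosSemidef := by
    have := Matrix.posSemidef_conjTranspose_mul_self X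
    simpa using this
  exact h.eigenvalues_nonneg i

lemma svdV_ortho (X : Matrix (Fin n) (Fin n) ℝ) (i j : Fin n) :
    ∑ k, svdV X i k * svdV X j k = if i = j then 1 else 0 := by
  have h := (orthonormal_iff_ite (𝕜 := ℝ)).mp
    (isHerm_tmul X).eigenvectorBasis.orthonormal i j
  rw [PiLp.inner_apply] at h
  simpa [svdV, mul_comm] using h

lemma svdV_complete (X : Matrix (Fin n) (Fin n) ℝ) (k l : Fin n) :
    ∑ i, svdV X i k * svdV X i l = if k = l then 1 else 0 := by
  have h := (isHerm_tmul X).eigenvectorBasis.sum_inner_mul_inner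
    (EuclideanSpace.single k (1:ℝ)) (EuclideanSpace.single l (1:ℝ))
  simp only [EuclideanSpace.inner_single_left, EuclideanSpace.inner_single_right,
    starRingEnd_apply, star_one, one_mul, mul_one, star_trivial] at h
  simpa [svdV, EuclideanSpace.single_apply, eq_comm] using h

lemma svdXv_dot (X : Matrix (Fin n) (Fin n) ℝ) (i j : Fin n) :
    ∑ k, (X *ᵥ svdV X i) k * (X *ᵥ svdV X j) k = if i = j then svdMu X i else 0 := by
  have h1 : (X *ᵥ svdV X i) ⬝ᵥ (X *ᵥ svdV X j) = ((Xᵀ * X) *ᵥ svdV X i) ⬝ᵥ (svdV X j) := by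
    rw [Matrix.dotProduct_mulVec, ← Matrix.mulVec_transpose, Matrix.mulVec_mulVec]
  have h2 : (Xᵀ * X) *ᵥ svdV X i = svdMu X i • svdV X i :=
    (isHerm_tmul X).mulVec_eigenvectorBasis i
  have h3 := svdV_ortho X i j
  calc ∑ k, (X *ᵥ svdV X i) k * (X *ᵥ svdV X j) k
      = (X *ᵥ svdV X i) ⬝ᵥ (X *ᵥ svdV X j) := rfl
    _ = ((Xᵀ * X) *ᵥ svdV X i) ⬝ᵥ (svdV X j) := h1
    _ = svdMu X i * ∑ k, svdV X i k * svdV X j k := by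
        rw [h2, smul_dotProduct]; simp [dotProduct, Finset.mul_sum]
    _ = if i = j then svdMu X i else 0 := by rw [h3]; split <;> simp

lemma svdXv_eq (X : Matrix (Fin n) (Fin n) ℝ) (i : Fin n) :
    X *ᵥ svdV X i = Real.sqrt (svdMu X i) • svdU X i := by
  by_cases h : svdMu X i = 0
  · have h0 : ∑ k, (X *ᵥ svdV X i) k * (X *ᵥ svdV X i) k = 0 := by
      rw [svdXv_dot, if_pos rfl, h]
    have : ∀ k, (X *ᵥ svdV X i) k = 0 := by
      intro k
      have := (Finset.sum_eq_zero_iff_of_nonneg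
        (fun k _ => mul_self_nonneg ((X *ᵥ svdV X i) k))).mp h0 k (Finset.mem_univ k)
      exact mul_self_eq_zero.mp this
    funext k
    simp [svdU, h, this k]
  · have hpos : 0 < svdMu X i := lt_of_le_of_ne (svdMu_nonneg X i) (Ne.symm h)
    have hs : Real.sqrt (svdMu X i) ≠ 0 := ne_of_gt (Real.sqrt_pos.mpr hpos)
    rw [svdU, if_neg h, smul_smul, mul_inv_cancel₀ hs, one_smul]

lemma svdU_dot (X : Matrix (Fin n) (Fin n) ℝ) (i j : Fin n) :
    ∑ k, svdU X i k * svdU X j k = if i = j ∧ svdMu X i ≠ 0 then 1 else 0 := by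
  by_cases hi : svdMu X i = 0
  · simp [svdU, hi]
  · by_cases hj : svdMu X j = 0
    · have : ¬(i = j ∧ svdMu X i ≠ 0) := by
        rintro ⟨rfl, h⟩; simp_all
      simp [svdU, hj, this]
    · rw [svdU, svdU, if_neg hi, if_neg hj]
      simp only [Pi.smul_apply, smul_eq_mul]
      have : ∑ k, (Real.sqrt (svdMu X i))⁻¹ * (X *ᵥ svdV X i) k *
          ((Real.sqrt (svdMu X j))⁻¹ * (X *ᵥ svdV X j) k)
          = (Real.sqrt (svdMu X i))⁻¹ * (Real.sqrt (svdMu X j))⁻¹ *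
            ∑ k, (X *ᵥ svdV X i) k * (X *ᵥ svdV X j) k := by
        rw [Finset.mul_sum]; apply Finset.sum_congr rfl; intro k _; ring
      rw [this, svdXv_dot]
      by_cases hij : i = j
      · subst hij
        have hpos : 0 < svdMu X i := lt_of_le_of_ne (svdMu_nonneg X i) (Ne.symm hi)
        rw [if_pos rfl, if_pos ⟨rfl, hi⟩]
        rw [← mul_inv, Real.mul_self_sqrt (le_of_lt hpos), inv_mul_cancel₀ (ne_of_gt hpos)]
      · simp [hij]

lemma svd_decomp (X : Matrix (Fin n) (Fin n) ℝ) (j k : Fin n) :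
    X j k = ∑ i, Real.sqrt (svdMu X i) * (svdU X i j * svdV X i k) := by
  have h1 : ∑ i, (X *ᵥ svdV X i) j * svdV X i k = X j k := by
    have : ∀ i, (X *ᵥ svdV X i) j * svdV X i k = ∑ l, X j l * (svdV X i l * svdV X i k) := by
      intro i
      rw [Matrix.mulVec, dotProduct, Finset.sum_mul]
      apply Finset.sum_congr rfl; intro l _; ring
    rw [Finset.sum_congr rfl (fun i _ => this i), Finset.sum_comm]
    have : ∀ l, ∑ i, X j l * (svdV X i l * svdV X i k) = X j l * ∑ i, svdV X i l * svdV X i k := by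
      intro l; rw [Finset.mul_sum]
    rw [Finset.sum_congr rfl (fun l _ => this l)]
    rw [Finset.sum_congr rfl (fun l _ => by rw [svdV_complete])]
    simp [eq_comm]
  rw [← h1]
  apply Finset.sum_congr rfl
  intro i _
  rw [svdXv_eq]
  simp [mul_assoc]

lemma nuclearNorm_eq_sum (X : Matrix (Fin n) (Fin n) ℝ) :
    nuclearNorm X = ∑ i, Real.sqrt (svdMu X i) := rfl

lemma nuclearNorm_nonneg {m k : ℕ} (X : Matrix (Fin m) (Fin k) ℝ) : 0 ≤ nuclearNorm X :=
  Finset.sum_nonneg fun i _ => Real.sqrt_nonneg _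


-- ## Duality layer

lemma abs_dot_le {k : ℕ} (a b : Fin k → ℝ) : |∑ j, a j * b j| ≤ _root_.enorm a * _root_.enorm b := by
  have h2 := Finset.sum_mul_sq_le_sq_mul_sq Finset.univ a b
  calc |∑ j, a j * b j| = Real.sqrt ((∑ j, a j * b j) ^ 2) := by
        rw [Real.sqrt_sq_eq_abs]
    _ ≤ Real.sqrt ((∑ j, a j ^ 2) * ∑ j, b j ^ 2) := Real.sqrt_le_sqrt h2
    _ = _root_.enorm a * _root_.enorm b := by
        rw [Real.sqrt_mul (Finset.sum_nonneg fun j _ => sq_nonneg _)]; rfl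

lemma dot_le {k : ℕ} (a b : Fin k → ℝ) : ∑ j, a j * b j ≤ _root_.enorm a * _root_.enorm b :=
  (le_abs_self _).trans (abs_dot_le a b)

lemma enorm_nonneg {k : ℕ} (a : Fin k → ℝ) : 0 ≤ _root_.enorm a := Real.sqrt_nonneg _

lemma enorm_le_one {k : ℕ} {a : Fin k → ℝ} (h : ∑ j, a j ^ 2 ≤ 1) : _root_.enorm a ≤ 1 := by
  rw [_root_.enorm, show (1:ℝ) = Real.sqrt 1 by simp]
  exact Real.sqrt_le_sqrt h

lemma pair_bound {m k : ℕ} (Z : Matrix (Fin m) (Fin k) ℝ) {c : ℝ} (hc : specNorm Z ≤ c)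
    (u : Fin m → ℝ) (v : Fin k → ℝ) (hu : ∑ j, u j ^ 2 ≤ 1) (hv : ∑ j, v j ^ 2 ≤ 1) :
    ∑ j, ∑ l, Z j l * (u j * v l) ≤ c := by
  have hc0 : 0 ≤ c := le_trans (specNorm_nonneg Z) hc
  have h1 : ∑ j, ∑ l, Z j l * (u j * v l) = ∑ j, u j * (Z *ᵥ v) j := by
    apply Finset.sum_congr rfl; intro j _
    rw [Matrix.mulVec, dotProduct, Finset.mul_sum]
    apply Finset.sum_congr rfl; intro l _; ring
  rw [h1]
  calc ∑ j, u j * (Z *ᵥ v) j ≤ _root_.enorm u * _root_.enorm (Z *ᵥ v) := dot_le _ _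
    _ ≤ 1 * (specNorm Z * _root_.enorm v) :=
        mul_le_mul (enorm_le_one hu) (norm_mulVec_le Z v) (enorm_nonneg _)
          (by linarith)
    _ ≤ 1 * (c * 1) := by
        rw [one_mul, one_mul]
        apply mul_le_mul hc (enorm_le_one hv) (enorm_nonneg _) hc0
    _ = c := by ring

lemma sum_sq_svdU_le_one {n : ℕ} (X : Matrix (Fin n) (Fin n) ℝ) (i : Fin n) :
    ∑ j, svdU X i j ^ 2 ≤ 1 := by
  have := svdU_dot X i i
  simp only [sq]
  rw [this]
  split <;> norm_num

lemma sum_sq_svdV_eq_one {n : ℕ} (X : Matrix (Fin n) (Fin n) ℝ) (i : Fin n) :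
    ∑ j, svdV X i j ^ 2 = 1 := by
  have := svdV_ortho X i i
  simp only [sq]
  rw [this, if_pos rfl]

lemma ip_le_mul_nuclear {n : ℕ} (Z X : Matrix (Fin n) (Fin n) ℝ) {c : ℝ}
    (hc : specNorm Z ≤ c) : ip Z X ≤ c * nuclearNorm X := by
  have h1 : ip Z X = ∑ i, Real.sqrt (svdMu X i) * (∑ j, ∑ l, Z j l * (svdU X i j * svdV X i l)) := by
    rw [ip]
    have : ∀ j, ∀ l, Z j l * X j l
        = ∑ i, Real.sqrt (svdMu X i) * (Z j l * (svdU X i j * svdV X i l)) := by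
      intro j l
      rw [show X j l = ∑ i, Real.sqrt (svdMu X i) * (svdU X i j * svdV X i l) from svd_decomp X j l]
      rw [Finset.mul_sum]
      apply Finset.sum_congr rfl; intro i _; ring
    calc ∑ j, ∑ l, Z j l * X j l = ∑ j, ∑ l, ∑ i, Real.sqrt (svdMu X i) * (Z j l * (svdU X i j * svdV X i l)) := by
          apply Finset.sum_congr rfl; intro j _
          apply Finset.sum_congr rfl; intro l _
          exact this j l
      _ = ∑ j, ∑ i, ∑ l, Real.sqrt (svdMu X i) * (Z j l * (svdU X i j * svdV X i l)) := by
          apply Finset.sum_congr rfl; intro j _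
          exact Finset.sum_comm
      _ = ∑ i, ∑ j, ∑ l, Real.sqrt (svdMu X i) * (Z j l * (svdU X i j * svdV X i l)) :=
          Finset.sum_comm
      _ = ∑ i, Real.sqrt (svdMu X i) * (∑ j, ∑ l, Z j l * (svdU X i j * svdV X i l)) := by
          apply Finset.sum_congr rfl; intro i _
          rw [Finset.mul_sum]
          apply Finset.sum_congr rfl; intro j _
          rw [Finset.mul_sum]
  rw [h1, nuclearNorm_eq_sum, Finset.mul_sum]
  apply Finset.sum_le_sum
  intro i _
  rw [mul_comm c (Real.sqrt (svdMu X i))]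
  apply mul_le_mul_of_nonneg_left _ (Real.sqrt_nonneg _)
  exact pair_bound Z hc _ _ (sum_sq_svdU_le_one X i) (le_of_eq (sum_sq_svdV_eq_one X i))

lemma sum_outer_pair {n : ℕ} (a b : Fin n → Fin n → ℝ) (u v : Fin n → ℝ) :
    ∑ j, ∑ l, (∑ i, a i j * b i l) * (u j * v l)
      = ∑ i, (∑ j, a i j * u j) * (∑ l, b i l * v l) := by
  have lhs : ∀ j, ∀ l, (∑ i, a i j * b i l) * (u j * v l)
      = ∑ i, a i j * u j * (b i l * v l) := by
    intro j l; rw [Finset.sum_mul]; apply Finset.sum_congr rfl; intro i _; ring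
  have rhs : ∀ i, (∑ j, a i j * u j) * (∑ l, b i l * v l)
      = ∑ j, ∑ l, a i j * u j * (b i l * v l) := by
    intro i
    rw [Finset.sum_mul]
    apply Finset.sum_congr rfl; intro j _
    rw [Finset.mul_sum]
  calc ∑ j, ∑ l, (∑ i, a i j * b i l) * (u j * v l)
      = ∑ j, ∑ l, ∑ i, a i j * u j * (b i l * v l) := by
        apply Finset.sum_congr rfl; intro j _
        apply Finset.sum_congr rfl; intro l _
        exact lhs j l
    _ = ∑ j, ∑ i, ∑ l, a i j * u j * (b i l * v l) := by
        apply Finset.sum_congr rfl; intro j _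
        exact Finset.sum_comm
    _ = ∑ i, ∑ j, ∑ l, a i j * u j * (b i l * v l) := Finset.sum_comm
    _ = ∑ i, (∑ j, a i j * u j) * (∑ l, b i l * v l) := by
        apply Finset.sum_congr rfl; intro i _
        exact (rhs i).symm


lemma svdV_parseval {n : ℕ} (X : Matrix (Fin n) (Fin n) ℝ) (x : Fin n → ℝ) :
    ∑ i, (∑ k, svdV X i k * x k) ^ 2 = ∑ k, x k ^ 2 := by
  have h1 : ∀ i, (∑ k, svdV X i k * x k) ^ 2
      = ∑ k, ∑ l, x k * x l * (svdV X i k * svdV X i l) := by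
    intro i
    rw [sq, Finset.sum_mul]
    apply Finset.sum_congr rfl; intro k _
    rw [Finset.mul_sum]
    apply Finset.sum_congr rfl; intro l _; ring
  rw [Finset.sum_congr rfl fun i _ => h1 i]
  rw [Finset.sum_comm]
  have h2 : ∀ k, ∑ i, ∑ l, x k * x l * (svdV X i k * svdV X i l)
      = ∑ l, x k * x l * (∑ i, svdV X i k * svdV X i l) := by
    intro k
    rw [Finset.sum_comm]
    apply Finset.sum_congr rfl; intro l _
    rw [Finset.mul_sum]
  rw [Finset.sum_congr rfl fun k _ => h2 k]
  apply Finset.sum_congr rfl; intro k _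
  rw [Finset.sum_congr rfl fun l (_ : l ∈ Finset.univ) => by rw [svdV_complete]]
  simp [sq]

/-- The dual achiever: a matrix of spectral norm ≤ 1 whose pairing with X equals the
nuclear norm of X; moreover it is an explicit sum of outer products. -/
lemma exists_dual {n : ℕ} (X : Matrix (Fin n) (Fin n) ℝ) :
    ∃ Z : Matrix (Fin n) (Fin n) ℝ, specNorm Z ≤ 1 ∧ ip Z X = nuclearNorm X := by
  refine ⟨Matrix.of (fun j l => ∑ i, svdU X i j * svdV X i l), ?_, ?_⟩
  · apply specNorm_le_of_bound _ zero_le_one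
    intro x
    rw [one_mul]
    have hZx : ∀ j, (Matrix.of (fun j l => ∑ i, svdU X i j * svdV X i l) *ᵥ x) j
        = ∑ i, svdU X i j * (∑ k, svdV X i k * x k) := by
      intro j
      rw [Matrix.mulVec, dotProduct]
      simp only [Matrix.of_apply]
      have e : ∀ l, (∑ i, svdU X i j * svdV X i l) * x l
          = ∑ i, svdU X i j * (svdV X i l * x l) := by
        intro l; rw [Finset.sum_mul]; apply Finset.sum_congr rfl; intro i _; ring
      rw [Finset.sum_congr rfl fun l _ => e l, Finset.sum_comm]
      apply Finset.sum_congr rfl; intro i _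
      rw [Finset.mul_sum]
    have key : ∑ j, ((Matrix.of (fun j l => ∑ i, svdU X i j * svdV X i l) *ᵥ x) j) ^ 2
        ≤ ∑ k, x k ^ 2 := by
      have expand : ∑ j, (∑ i, svdU X i j * (∑ k, svdV X i k * x k)) ^ 2
          = ∑ i, ∑ i', (∑ k, svdV X i k * x k) * (∑ k, svdV X i' k * x k)
              * (∑ j, svdU X i j * svdU X i' j) := by
        have e1 : ∀ j, (∑ i, svdU X i j * (∑ k, svdV X i k * x k)) ^ 2
            = ∑ i, ∑ i', (∑ k, svdV X i k * x k) * (∑ k, svdV X i' k * x k)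
                * (svdU X i j * svdU X i' j) := by
          intro j
          rw [sq, Finset.sum_mul]
          apply Finset.sum_congr rfl; intro i _
          rw [Finset.mul_sum]
          apply Finset.sum_congr rfl; intro i' _; ring
        rw [Finset.sum_congr rfl fun j _ => e1 j, Finset.sum_comm]
        apply Finset.sum_congr rfl; intro i _
        rw [Finset.sum_comm]
        apply Finset.sum_congr rfl; intro i' _
        exact (Finset.mul_sum _ _ _).symm
      calc ∑ j, ((Matrix.of (fun j l => ∑ i, svdU X i j * svdV X i l) *ᵥ x) j) ^ 2
          = ∑ j, (∑ i, svdU X i j * (∑ k, svdV X i k * x k)) ^ 2 := by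
            apply Finset.sum_congr rfl; intro j _; rw [hZx]
        _ = ∑ i, ∑ i', (∑ k, svdV X i k * x k) * (∑ k, svdV X i' k * x k)
              * (∑ j, svdU X i j * svdU X i' j) := expand
        _ = ∑ i, (if svdMu X i ≠ 0 then (∑ k, svdV X i k * x k) ^ 2 else 0) := by
            apply Finset.sum_congr rfl; intro i _
            rw [Finset.sum_eq_single i]
            · rw [svdU_dot]
              by_cases h : svdMu X i = 0
              · simp [h]
              · simp [h, sq]
            · intro i' _ hne
              rw [svdU_dot]
              simp [Ne.symm hne]
            · intro h; exact absurd (Finset.mem_univ i) h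
        _ ≤ ∑ i, (∑ k, svdV X i k * x k) ^ 2 := by
            apply Finset.sum_le_sum; intro i _
            split
            · exact le_rfl
            · exact sq_nonneg _
        _ = ∑ k, x k ^ 2 := svdV_parseval X x
    rw [_root_.enorm, _root_.enorm]
    exact Real.sqrt_le_sqrt key
  · have h1 : ip (Matrix.of (fun j l => ∑ i, svdU X i j * svdV X i l)) X
        = ∑ i', Real.sqrt (svdMu X i') * ∑ i, (∑ j, svdU X i j * svdU X i' j)
            * (∑ l, svdV X i l * svdV X i' l) := by
      rw [ip]
      have e0 : ∀ j, ∀ l, (Matrix.of (fun j l => ∑ i, svdU X i j * svdV X i l)) j l * X j l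
          = ∑ i', Real.sqrt (svdMu X i')
              * ((∑ i, svdU X i j * svdV X i l) * (svdU X i' j * svdV X i' l)) := by
        intro j l
        simp only [Matrix.of_apply]
        rw [show X j l = ∑ i', Real.sqrt (svdMu X i') * (svdU X i' j * svdV X i' l) from
          svd_decomp X j l, Finset.mul_sum]
        apply Finset.sum_congr rfl; intro i' _; ring
      calc ∑ j, ∑ l, (Matrix.of (fun j l => ∑ i, svdU X i j * svdV X i l)) j l * X j l
          = ∑ j, ∑ l, ∑ i', Real.sqrt (svdMu X i')
              * ((∑ i, svdU X i j * svdV X i l) * (svdU X i' j * svdV X i' l)) := by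
            apply Finset.sum_congr rfl; intro j _
            apply Finset.sum_congr rfl; intro l _
            exact e0 j l
        _ = ∑ j, ∑ i', ∑ l, Real.sqrt (svdMu X i')
              * ((∑ i, svdU X i j * svdV X i l) * (svdU X i' j * svdV X i' l)) := by
            apply Finset.sum_congr rfl; intro j _; exact Finset.sum_comm
        _ = ∑ i', ∑ j, ∑ l, Real.sqrt (svdMu X i')
              * ((∑ i, svdU X i j * svdV X i l) * (svdU X i' j * svdV X i' l)) :=
            Finset.sum_comm
        _ = ∑ i', Real.sqrt (svdMu X i') * ∑ i, (∑ j, svdU X i j * svdU X i' j)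
              * (∑ l, svdV X i l * svdV X i' l) := by
            apply Finset.sum_congr rfl; intro i' _
            rw [← sum_outer_pair (fun i j => svdU X i j) (fun i l => svdV X i l)
              (fun j => svdU X i' j) (fun l => svdV X i' l)]
            rw [Finset.mul_sum]
            apply Finset.sum_congr rfl; intro j _
            exact (Finset.mul_sum _ _ _).symm
    rw [h1, nuclearNorm_eq_sum]
    apply Finset.sum_congr rfl; intro i' _
    by_cases h : svdMu X i' = 0
    · simp [h]
    · have : ∑ i, (∑ j, svdU X i j * svdU X i' j) * (∑ l, svdV X i l * svdV X i' l) = 1 := by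
        rw [Finset.sum_eq_single i']
        · rw [svdU_dot, svdV_ortho, if_pos ⟨rfl, h⟩, if_pos rfl, one_mul]
        · intro i _ hne
          rw [svdV_ortho, if_neg hne, mul_zero]
        · intro hh; exact absurd (Finset.mem_univ i') hh
      rw [this, mul_one]

lemma frob_le_nuclear {n : ℕ} (X : Matrix (Fin n) (Fin n) ℝ) : frobNorm X ≤ nuclearNorm X := by
  by_cases h : frobNorm X = 0
  · rw [h]; exact nuclearNorm_nonneg X
  · have hpos : 0 < frobNorm X := lt_of_le_of_ne (frob_nonneg X) (Ne.symm h)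
    have hspec : specNorm X ≤ frobNorm X := by
      apply specNorm_le_of_bound _ (frob_nonneg X)
      intro x
      rw [_root_.enorm, _root_.enorm]
      have hrow : ∀ i, ((X *ᵥ x) i) ^ 2 ≤ (∑ j, X i j ^ 2) * (∑ j, x j ^ 2) := by
        intro i
        have := Finset.sum_mul_sq_le_sq_mul_sq Finset.univ (X i) x
        simpa [Matrix.mulVec, dotProduct] using this
      calc Real.sqrt (∑ i, ((X *ᵥ x) i) ^ 2)
          ≤ Real.sqrt (∑ i, (∑ j, X i j ^ 2) * (∑ j, x j ^ 2)) := by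
            apply Real.sqrt_le_sqrt
            exact Finset.sum_le_sum fun i _ => hrow i
        _ = frobNorm X * Real.sqrt (∑ j, x j ^ 2) := by
            rw [← Finset.sum_mul]
            exact Real.sqrt_mul (Finset.sum_nonneg fun i _ =>
              Finset.sum_nonneg fun j _ => sq_nonneg _) _
    have h2 : ip X X ≤ frobNorm X * nuclearNorm X := ip_le_mul_nuclear X X hspec
    rw [← frob_sq] at h2
    nlinarith


-- ## ip linearity
lemma ip_add_right {m k : ℕ} (A B C : Matrix (Fin m) (Fin k) ℝ) :
    ip A (B + C) = ip A B + ip A C := by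
  simp [ip, mul_add, Finset.sum_add_distrib]

lemma ip_sub_right {m k : ℕ} (A B C : Matrix (Fin m) (Fin k) ℝ) :
    ip A (B - C) = ip A B - ip A C := by
  simp [ip, mul_sub, Finset.sum_sub_distrib]

lemma ip_add_left {m k : ℕ} (A B C : Matrix (Fin m) (Fin k) ℝ) :
    ip (A + B) C = ip A C + ip B C := by
  simp [ip, add_mul, Finset.sum_add_distrib]

lemma ip_sub_left {m k : ℕ} (A B C : Matrix (Fin m) (Fin k) ℝ) :
    ip (A - B) C = ip A C - ip B C := by
  simp [ip, sub_mul, Finset.sum_sub_distrib]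

lemma ip_smul_right {m k : ℕ} (c : ℝ) (A B : Matrix (Fin m) (Fin k) ℝ) :
    ip A (c • B) = c * ip A B := by
  rw [ip, ip, Finset.mul_sum]
  apply Finset.sum_congr rfl; intro i _
  rw [Finset.mul_sum]
  apply Finset.sum_congr rfl; intro j _
  simp [Matrix.smul_apply]; ring

lemma ip_zero_right {m k : ℕ} (A : Matrix (Fin m) (Fin k) ℝ) : ip A 0 = 0 := by
  simp [ip]

lemma ip_neg_left {m k : ℕ} (A B : Matrix (Fin m) (Fin k) ℝ) : ip (-A) B = -ip A B := by
  simp [ip, Finset.sum_neg_distrib]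

lemma frob_neg {m k : ℕ} (A : Matrix (Fin m) (Fin k) ℝ) : frobNorm (-A) = frobNorm A := by
  simp [frobNorm]

lemma frob_smul {m k : ℕ} (c : ℝ) (A : Matrix (Fin m) (Fin k) ℝ) :
    frobNorm (c • A) = |c| * frobNorm A := by
  rw [frobNorm, frobNorm]
  have : ∑ i, ∑ j, ((c • A) i j) ^ 2 = c ^ 2 * ∑ i, ∑ j, (A i j) ^ 2 := by
    rw [Finset.mul_sum]
    apply Finset.sum_congr rfl; intro i _
    rw [Finset.mul_sum]
    apply Finset.sum_congr rfl; intro j _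
    simp [Matrix.smul_apply]; ring
  rw [this, Real.sqrt_mul (sq_nonneg c), Real.sqrt_sq_eq_abs]

lemma frob_add_le {m k : ℕ} (A B : Matrix (Fin m) (Fin k) ℝ) :
    frobNorm (A + B) ≤ frobNorm A + frobNorm B := by
  have h1 : frobNorm (A + B) ^ 2 = frobNorm A ^ 2 + 2 * ip A B + frobNorm B ^ 2 := by
    rw [frob_sq, frob_sq, frob_sq, ip_add_left, ip_add_right, ip_add_right, ip_comm B A]
    ring
  have h2 : ip A B ≤ frobNorm A * frobNorm B := ip_le A B
  nlinarith [frob_nonneg (A + B), frob_nonneg A, frob_nonneg B]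

lemma frob_sub_le {m k : ℕ} (A B : Matrix (Fin m) (Fin k) ℝ) :
    frobNorm (A - B) ≤ frobNorm A + frobNorm B := by
  have := frob_add_le A (-B)
  simpa [sub_eq_add_neg, frob_neg] using this

-- ## projS lemmas
open Classical in
lemma projS_apply {n : ℕ} (Ω : Set (Fin n × Fin n)) (Z : Matrix (Fin n) (Fin n) ℝ) (i j : Fin n) :
    projS Ω Z i j = if (i, j) ∈ Ω then Z i j else 0 := rfl

lemma ip_projS_symm {n : ℕ} (Ω : Set (Fin n × Fin n)) (Y Z : Matrix (Fin n) (Fin n) ℝ) :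
    ip (projS Ω Y) Z = ip Y (projS Ω Z) := by
  apply Finset.sum_congr rfl; intro i _
  apply Finset.sum_congr rfl; intro j _
  rw [projS_apply, projS_apply]
  split <;> simp

lemma ip_projS_self {n : ℕ} (Ω : Set (Fin n × Fin n)) (Z : Matrix (Fin n) (Fin n) ℝ) :
    ip Z (projS Ω Z) = ip (projS Ω Z) (projS Ω Z) := by
  apply Finset.sum_congr rfl; intro i _
  apply Finset.sum_congr rfl; intro j _
  simp only [projS_apply]
  split <;> simp

lemma frob_projS_le {n : ℕ} (Ω : Set (Fin n × Fin n)) (Z : Matrix (Fin n) (Fin n) ℝ) :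
    frobNorm (projS Ω Z) ≤ frobNorm Z := by
  apply Real.sqrt_le_sqrt
  apply Finset.sum_le_sum; intro i _
  apply Finset.sum_le_sum; intro j _
  rw [projS_apply]
  split
  · exact le_rfl
  · simpa using sq_nonneg (Z i j)

lemma projS_zero_of_vanish {n : ℕ} (Ω : Set (Fin n × Fin n)) (Δ : Matrix (Fin n) (Fin n) ℝ)
    (h : ∀ i j, (i, j) ∈ Ω → Δ i j = 0) : projS Ω Δ = 0 := by
  funext i j
  rw [projS_apply]
  split
  · next hm => exact h i j hm
  · rfl

lemma projS_sub {n : ℕ} (Ω : Set (Fin n × Fin n)) (A B : Matrix (Fin n) (Fin n) ℝ) :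
    projS Ω (A - B) = projS Ω A - projS Ω B := by
  funext i j
  simp only [projS_apply, Matrix.sub_apply]
  split <;> simp

lemma projS_smul {n : ℕ} (Ω : Set (Fin n × Fin n)) (c : ℝ) (A : Matrix (Fin n) (Fin n) ℝ) :
    projS Ω (c • A) = c • projS Ω A := by
  funext i j
  simp only [projS_apply, Matrix.smul_apply]
  split <;> simp

-- ## projT lemmas
section ProjT
variable {n r : ℕ} (U V : Matrix (Fin n) (Fin r) ℝ) (hU : Uᵀ * U = 1) (hV : Vᵀ * V = 1)

lemma projT_eq (Z : Matrix (Fin n) (Fin n) ℝ) :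
    projT U V Z = U * Uᵀ * Z + Z * (V * Vᵀ) - U * Uᵀ * Z * (V * Vᵀ) := by
  rw [projT, Matrix.mul_assoc Z V Vᵀ, Matrix.mul_assoc (U * Uᵀ * Z) V Vᵀ]

include hU in
lemma UUt_idem : (U * Uᵀ) * (U * Uᵀ) = U * Uᵀ := by
  rw [Matrix.mul_assoc, ← Matrix.mul_assoc Uᵀ U Uᵀ, hU, Matrix.one_mul]

include hU hV in
lemma projT_idem (Z : Matrix (Fin n) (Fin n) ℝ) :
    projT U V (projT U V Z) = projT U V Z := by
  have hA := UUt_idem U hU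
  have hB := UUt_idem V hV
  rw [projT_eq, projT_eq]
  set A := U * Uᵀ
  set B := V * Vᵀ
  simp only [Matrix.mul_add, Matrix.add_mul, Matrix.mul_sub, Matrix.sub_mul]
  rw [← Matrix.mul_assoc A A Z, hA]
  rw [show A * (Z * B) = A * Z * B from (Matrix.mul_assoc A Z B).symm]
  rw [show A * (A * Z * B) = A * A * Z * B by rw [Matrix.mul_assoc A A Z, Matrix.mul_assoc A (A*Z) B], hA]
  rw [Matrix.mul_assoc Z B B, hB]
  rw [show A * Z * B * B = A * Z * (B * B) from Matrix.mul_assoc (A*Z) B B, hB]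
  abel

include hU in
lemma projT_fix_UV : projT U V (U * Vᵀ) = U * Vᵀ := by
  rw [projT_eq]
  have h1 : U * Uᵀ * (U * Vᵀ) = U * Vᵀ := by
    rw [Matrix.mul_assoc, ← Matrix.mul_assoc Uᵀ U Vᵀ, hU, Matrix.one_mul]
  rw [h1]
  abel

lemma ip_projT_symm (Y Z : Matrix (Fin n) (Fin n) ℝ) :
    ip (projT U V Y) Z = ip Y (projT U V Z) := by
  rw [projT_eq, projT_eq]
  have hAt : (U * Uᵀ)ᵀ = U * Uᵀ := by rw [Matrix.transpose_mul, Matrix.transpose_transpose]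
  have hBt : (V * Vᵀ)ᵀ = V * Vᵀ := by rw [Matrix.transpose_mul, Matrix.transpose_transpose]
  rw [ip_sub_left, ip_add_left, ip_sub_right, ip_add_right]
  congr 1
  congr 1
  · rw [ip_mul_left, hAt]
  · rw [ip_mul_right, hBt]
  · rw [show U * Uᵀ * Y * (V * Vᵀ) = (U * Uᵀ) * (Y * (V * Vᵀ)) from Matrix.mul_assoc _ _ _]
    rw [ip_mul_left, hAt, ip_mul_right, hBt, Matrix.mul_assoc]

include hU hV in
lemma ip_projT_perp (Z : Matrix (Fin n) (Fin n) ℝ) :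
    ip (projT U V Z) (Z - projT U V Z) = 0 := by
  have h1 : ip (projT U V Z) (projT U V Z) = ip (projT U V Z) Z := by
    calc ip (projT U V Z) (projT U V Z) = ip (projT U V (projT U V Z)) Z := by
          rw [ip_projT_symm, ip_comm]
      _ = ip (projT U V Z) Z := by rw [projT_idem U V hU hV]
  rw [ip_sub_right, h1, sub_self]

include hU hV in
lemma frob_projT_le (Z : Matrix (Fin n) (Fin n) ℝ) :
    frobNorm (projT U V Z) ≤ frobNorm Z := by
  have hperp := ip_projT_perp U V hU hV Z
  have hdecomp : ip Z Z = ip (projT U V Z) (projT U V Z) + ip (Z - projT U V Z) (Z - projT U V Z) := by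
    have : Z = projT U V Z + (Z - projT U V Z) := by abel
    calc ip Z Z = ip (projT U V Z + (Z - projT U V Z)) (projT U V Z + (Z - projT U V Z)) := by
          rw [← this]
      _ = _ := by
          rw [ip_add_left, ip_add_right, ip_add_right]
          rw [ip_comm (Z - projT U V Z) (projT U V Z)]
          rw [hperp]
          ring
  have h2 : frobNorm (projT U V Z) ^ 2 ≤ frobNorm Z ^ 2 := by
    rw [frob_sq, frob_sq]
    have := ip_nonneg_self (Z - projT U V Z)
    linarith
  have := frob_nonneg (projT U V Z)
  nlinarith [frob_nonneg Z]

include hU hV in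
lemma frob_projT_perp_le (Z : Matrix (Fin n) (Fin n) ℝ) :
    frobNorm (Z - projT U V Z) ≤ frobNorm Z := by
  have hperp := ip_projT_perp U V hU hV Z
  have hdecomp : ip Z Z = ip (projT U V Z) (projT U V Z) + ip (Z - projT U V Z) (Z - projT U V Z) := by
    have : Z = projT U V Z + (Z - projT U V Z) := by abel
    calc ip Z Z = ip (projT U V Z + (Z - projT U V Z)) (projT U V Z + (Z - projT U V Z)) := by
          rw [← this]
      _ = _ := by
          rw [ip_add_left, ip_add_right, ip_add_right]
          rw [ip_comm (Z - projT U V Z) (projT U V Z)]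
          rw [hperp]
          ring
  have h2 : frobNorm (Z - projT U V Z) ^ 2 ≤ frobNorm Z ^ 2 := by
    rw [frob_sq, frob_sq]
    have := ip_nonneg_self (projT U V Z)
    linarith
  have := frob_nonneg (Z - projT U V Z)
  nlinarith [frob_nonneg Z]

lemma projT_perp_eq (Z : Matrix (Fin n) (Fin n) ℝ) :
    Z - projT U V Z = (1 - U * Uᵀ) * Z * (1 - V * Vᵀ) := by
  rw [projT_eq]
  simp only [Matrix.sub_mul, Matrix.mul_sub, Matrix.one_mul, Matrix.mul_one]
  abel

lemma projT_smul (c : ℝ) (Z : Matrix (Fin n) (Fin n) ℝ) :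
    projT U V (c • Z) = c • projT U V Z := by
  rw [projT_eq, projT_eq]
  simp only [Matrix.mul_smul, Matrix.smul_mul, smul_sub, smul_add]

end ProjT


-- ## opNormMap extraction
lemma frob_zero {m k : ℕ} : frobNorm (0 : Matrix (Fin m) (Fin k) ℝ) = 0 := by
  simp [frobNorm]

lemma opNormMap_apply_le {n : ℕ} {A : Matrix (Fin n) (Fin n) ℝ → Matrix (Fin n) (Fin n) ℝ}
    {b C : ℝ} (hb : opNormMap A ≤ b)
    (hhom : ∀ (c : ℝ), 0 ≤ c → ∀ Z, A (c • Z) = c • A Z)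
    (hC : ∀ Z, frobNorm Z ≤ 1 → frobNorm (A Z) ≤ C)
    (Z : Matrix (Fin n) (Fin n) ℝ) : frobNorm (A Z) ≤ b * frobNorm Z := by
  have hbdd : BddAbove (Set.range fun W : {W : Matrix (Fin n) (Fin n) ℝ // frobNorm W ≤ 1} =>
      frobNorm (A W.1)) := by
    refine ⟨C, ?_⟩
    rintro x ⟨W, rfl⟩
    exact hC W.1 W.2
  by_cases hz : frobNorm Z = 0
  · have hZ0 : Z = 0 := frob_eq_zero hz
    have : A Z = 0 := by
      have h0 : A ((0:ℝ) • (0 : Matrix (Fin n) (Fin n) ℝ)) = (0:ℝ) • A 0 := hhom 0 le_rfl 0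
      rw [zero_smul, zero_smul] at h0
      rw [hZ0, h0]
    rw [this, hz, frob_zero, mul_zero]
  · have ht : 0 < frobNorm Z := lt_of_le_of_ne (frob_nonneg Z) (Ne.symm hz)
    set t := frobNorm Z with htdef
    have hW1 : frobNorm (t⁻¹ • Z) ≤ 1 := by
      rw [frob_smul, abs_of_pos (inv_pos.mpr ht)]
      rw [inv_mul_cancel₀ (ne_of_gt ht)]
    have hle : frobNorm (A (t⁻¹ • Z)) ≤ opNormMap A :=
      le_ciSup hbdd (⟨t⁻¹ • Z, hW1⟩ : {W : Matrix (Fin n) (Fin n) ℝ // frobNorm W ≤ 1})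
    rw [hhom t⁻¹ (le_of_lt (inv_pos.mpr ht)) Z, frob_smul,
      abs_of_pos (inv_pos.mpr ht)] at hle
    have := le_trans hle hb
    calc frobNorm (A Z) = t * (t⁻¹ * frobNorm (A Z)) := by
          field_simp
      _ ≤ t * b := by
          apply mul_le_mul_of_nonneg_left this (le_of_lt ht)
      _ = b * t := mul_comm t b

-- ## dot product helpers
lemma dotmm {a b c : ℕ} (M : Matrix (Fin b) (Fin a) ℝ) (N : Matrix (Fin b) (Fin c) ℝ)
    (x : Fin a → ℝ) (y : Fin c → ℝ) :
    (M *ᵥ x) ⬝ᵥ (N *ᵥ y) = ((Nᵀ * M) *ᵥ x) ⬝ᵥ y := by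
  rw [Matrix.dotProduct_mulVec, ← Matrix.mulVec_transpose, Matrix.mulVec_mulVec]

lemma enorm_sq_eq_dot {k : ℕ} (y : Fin k → ℝ) : _root_.enorm y ^ 2 = y ⬝ᵥ y := by
  rw [_root_.enorm, Real.sq_sqrt (Finset.sum_nonneg fun i _ => sq_nonneg _)]
  simp [dotProduct, sq]

lemma dot_self_nonneg' {k : ℕ} (y : Fin k → ℝ) : 0 ≤ y ⬝ᵥ y := by
  rw [← enorm_sq_eq_dot]; exact sq_nonneg _

lemma enorm_eq_sqrt_dot {k : ℕ} (y : Fin k → ℝ) : _root_.enorm y = Real.sqrt (y ⬝ᵥ y) := by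
  rw [← enorm_sq_eq_dot, Real.sqrt_sq (enorm_nonneg y)]

lemma specNorm_neg {m k : ℕ} (A : Matrix (Fin m) (Fin k) ℝ) : specNorm (-A) = specNorm A := by
  rw [specNorm, specNorm, map_neg]
  have : (LinearMap.toContinuousLinearMap (-(Matrix.toEuclideanLin A)))
      = -(LinearMap.toContinuousLinearMap (Matrix.toEuclideanLin A)) := by
    ext x; rfl
  rw [this, norm_neg]

-- ## spectral bound for the subgradient certificate
lemma spec_UV_add_W {n r : ℕ} (U V : Matrix (Fin n) (Fin r) ℝ) (hU : Uᵀ * U = 1)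
    (hV : Vᵀ * V = 1) (W0 : Matrix (Fin n) (Fin n) ℝ) (hW0 : specNorm W0 ≤ 1) :
    specNorm (U * Vᵀ + (1 - U * Uᵀ) * W0 * (1 - V * Vᵀ)) ≤ 1 := by
  apply specNorm_le_of_bound _ zero_le_one
  intro x
  rw [one_mul]
  set P : Matrix (Fin n) (Fin n) ℝ := 1 - U * Uᵀ with hP
  set Q : Matrix (Fin n) (Fin n) ℝ := 1 - V * Vᵀ with hQ
  have hPt : Pᵀ = P := by
    rw [hP, Matrix.transpose_sub, Matrix.transpose_one, Matrix.transpose_mul,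
      Matrix.transpose_transpose]
  have hQt : Qᵀ = Q := by
    rw [hQ, Matrix.transpose_sub, Matrix.transpose_one, Matrix.transpose_mul,
      Matrix.transpose_transpose]
  have hPP : P * P = P := by
    rw [hP, Matrix.sub_mul, Matrix.one_mul, Matrix.mul_sub, Matrix.mul_one, UUt_idem U hU]
    abel
  have hQQ : Q * Q = Q := by
    rw [hQ, Matrix.sub_mul, Matrix.one_mul, Matrix.mul_sub, Matrix.mul_one, UUt_idem V hV]
    abel
  have hUUUV : U * Uᵀ * (U * Vᵀ) = U * Vᵀ := by
    rw [Matrix.mul_assoc, ← Matrix.mul_assoc Uᵀ U Vᵀ, hU, Matrix.one_mul]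
  have hPU : P * (U * Vᵀ) = 0 := by
    rw [hP, Matrix.sub_mul, Matrix.one_mul, hUUUV, sub_self]
  set y1 := (U * Vᵀ) *ᵥ x with hy1
  set y2 := (P * W0 * Q) *ᵥ x with hy2
  have hsplit : (U * Vᵀ + P * W0 * Q) *ᵥ x = y1 + y2 := Matrix.add_mulVec _ _ x
  have h12 : y1 ⬝ᵥ y2 = 0 := by
    rw [hy1, hy2, dotmm]
    have hz : (P * W0 * Q)ᵀ * (U * Vᵀ) = 0 := by
      rw [Matrix.transpose_mul, Matrix.transpose_mul, hPt, hQt]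
      rw [Matrix.mul_assoc Q (W0ᵀ * P) (U * Vᵀ), Matrix.mul_assoc W0ᵀ P (U * Vᵀ), hPU,
        Matrix.mul_zero, Matrix.mul_zero]
    rw [hz, Matrix.zero_mulVec, zero_dotProduct]
  have h21 : y2 ⬝ᵥ y1 = 0 := by rw [dotProduct_comm]; exact h12
  have hUVUV : (U * Vᵀ)ᵀ * (U * Vᵀ) = V * Vᵀ := by
    rw [Matrix.transpose_mul, Matrix.transpose_transpose, Matrix.mul_assoc,
      ← Matrix.mul_assoc Uᵀ U Vᵀ, hU, Matrix.one_mul]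
  have h11 : y1 ⬝ᵥ y1 = ((V * Vᵀ) *ᵥ x) ⬝ᵥ x := by rw [hy1, dotmm, hUVUV]
  -- P contracts
  have hPcontr : ∀ w : Fin n → ℝ, _root_.enorm (P *ᵥ w) ≤ _root_.enorm w := by
    intro w
    have e1 : (P *ᵥ w) ⬝ᵥ (P *ᵥ w) = ((Pᵀ * P) *ᵥ w) ⬝ᵥ w := dotmm P P w w
    have e2 : Pᵀ * P = P := by rw [hPt, hPP]
    have e3 : (P *ᵥ w) ⬝ᵥ w = w ⬝ᵥ w - ((U * Uᵀ) *ᵥ w) ⬝ᵥ w := by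
      rw [hP, Matrix.sub_mulVec, Matrix.one_mulVec, sub_dotProduct]
    have e4 : 0 ≤ ((U * Uᵀ) *ᵥ w) ⬝ᵥ w := by
      have := dotmm Uᵀ Uᵀ w w
      rw [Matrix.transpose_transpose] at this
      rw [← this]
      exact dot_self_nonneg' _
    rw [enorm_eq_sqrt_dot, enorm_eq_sqrt_dot]
    apply Real.sqrt_le_sqrt
    rw [e1, e2, e3]
    linarith
  -- Q perp identity
  have hQdot : ((Q *ᵥ x) ⬝ᵥ (Q *ᵥ x)) = x ⬝ᵥ x - ((V * Vᵀ) *ᵥ x) ⬝ᵥ x := by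
    have e1 : (Q *ᵥ x) ⬝ᵥ (Q *ᵥ x) = ((Qᵀ * Q) *ᵥ x) ⬝ᵥ x := dotmm Q Q x x
    have e2 : Qᵀ * Q = Q := by rw [hQt, hQQ]
    rw [e1, e2, hQ, Matrix.sub_mulVec, Matrix.one_mulVec, sub_dotProduct]
  have hVVnn : 0 ≤ ((V * Vᵀ) *ᵥ x) ⬝ᵥ x := by
    have := dotmm Vᵀ Vᵀ x x
    rw [Matrix.transpose_transpose] at this
    rw [← this]
    exact dot_self_nonneg' _
  -- bound y2
  have hy2eq : y2 = P *ᵥ (W0 *ᵥ (Q *ᵥ x)) := by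
    rw [hy2, ← Matrix.mulVec_mulVec, ← Matrix.mulVec_mulVec]
  have hy2le : _root_.enorm y2 ≤ _root_.enorm (Q *ᵥ x) := by
    rw [hy2eq]
    calc _root_.enorm (P *ᵥ (W0 *ᵥ (Q *ᵥ x))) ≤ _root_.enorm (W0 *ᵥ (Q *ᵥ x)) := hPcontr _
      _ ≤ specNorm W0 * _root_.enorm (Q *ᵥ x) := norm_mulVec_le W0 _
      _ ≤ 1 * _root_.enorm (Q *ᵥ x) := by
          apply mul_le_mul_of_nonneg_right hW0 (enorm_nonneg _)
      _ = _root_.enorm (Q *ᵥ x) := one_mul _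
  have hy2sq : y2 ⬝ᵥ y2 ≤ x ⬝ᵥ x - ((V * Vᵀ) *ᵥ x) ⬝ᵥ x := by
    rw [← hQdot]
    rw [← enorm_sq_eq_dot, ← enorm_sq_eq_dot]
    exact pow_le_pow_left₀ (enorm_nonneg _) hy2le 2
  -- combine
  rw [hsplit]
  have htot : (y1 + y2) ⬝ᵥ (y1 + y2) ≤ x ⬝ᵥ x := by
    rw [add_dotProduct, dotProduct_add, dotProduct_add, h12, h21, h11]
    linarith
  rw [enorm_eq_sqrt_dot, enorm_eq_sqrt_dot]
  exact Real.sqrt_le_sqrt htot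


-- ## final auxiliary lemmas
lemma projT_sub {n r : ℕ} (U V : Matrix (Fin n) (Fin r) ℝ) (A B : Matrix (Fin n) (Fin n) ℝ) :
    projT U V (A - B) = projT U V A - projT U V B := by
  rw [projT_eq, projT_eq, projT_eq]
  simp only [Matrix.mul_sub, Matrix.sub_mul]
  abel

lemma ip_W_generic {n r : ℕ} (U V : Matrix (Fin n) (Fin r) ℝ)
    (W0 Z : Matrix (Fin n) (Fin n) ℝ) :
    ip ((1 - U * Uᵀ) * W0 * (1 - V * Vᵀ)) Z
      = ip W0 ((1 - U * Uᵀ) * Z * (1 - V * Vᵀ)) := by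
  have hPt : (1 - U * Uᵀ)ᵀ = 1 - U * Uᵀ := by
    rw [Matrix.transpose_sub, Matrix.transpose_one, Matrix.transpose_mul,
      Matrix.transpose_transpose]
  have hQt : (1 - V * Vᵀ)ᵀ = 1 - V * Vᵀ := by
    rw [Matrix.transpose_sub, Matrix.transpose_one, Matrix.transpose_mul,
      Matrix.transpose_transpose]
  rw [ip_mul_right, hQt, ip_mul_left, hPt, Matrix.mul_assoc]

lemma sum_col_sq_eq_one {n r : ℕ} (U : Matrix (Fin n) (Fin r) ℝ) (hU : Uᵀ * U = 1)
    (a : Fin r) : ∑ j, U j a ^ 2 = 1 := by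
  have h := congrArg (fun B => B a a) hU
  simp only [Matrix.mul_apply, Matrix.transpose_apply, Matrix.one_apply_eq] at h
  rw [← h]
  apply Finset.sum_congr rfl; intro j _; ring


lemma entry_USVt {n r : ℕ} (U V : Matrix (Fin n) (Fin r) ℝ) (S : Matrix (Fin r) (Fin r) ℝ)
    (hSdiag : ∀ i j, i ≠ j → S i j = 0) (j l : Fin n) :
    (U * S * Vᵀ) j l = ∑ a, S a a * (U j a * V l a) := by
  rw [Matrix.mul_apply]
  have h1 : ∀ b, (U * S) j b = U j b * S b b := by
    intro b
    rw [Matrix.mul_apply]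
    rw [Finset.sum_eq_single b]
    · intro a _ hab
      rw [hSdiag a b hab, mul_zero]
    · intro h; exact absurd (Finset.mem_univ b) h
  calc ∑ b, (U * S) j b * Vᵀ b l = ∑ b, (U j b * S b b) * V l b := by
        apply Finset.sum_congr rfl; intro b _
        rw [h1 b, Matrix.transpose_apply]
    _ = ∑ a, S a a * (U j a * V l a) := by
        apply Finset.sum_congr rfl; intro a _; ring

lemma ip_rearrange {n r : ℕ} (Z : Matrix (Fin n) (Fin n) ℝ)
    (U V : Matrix (Fin n) (Fin r) ℝ) (S : Matrix (Fin r) (Fin r) ℝ)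
    (hSdiag : ∀ i j, i ≠ j → S i j = 0) :
    ip Z (U * S * Vᵀ) = ∑ a, S a a * (∑ j, ∑ l, Z j l * (U j a * V l a)) := by
  have e0 : ∀ j l, Z j l * (U * S * Vᵀ) j l
      = ∑ a, S a a * (Z j l * (U j a * V l a)) := by
    intro j l
    rw [entry_USVt U V S hSdiag j l, Finset.mul_sum]
    apply Finset.sum_congr rfl; intro a _; ring
  calc ip Z (U * S * Vᵀ)
      = ∑ j, ∑ l, ∑ a, S a a * (Z j l * (U j a * V l a)) := by
        rw [ip]
        apply Finset.sum_congr rfl; intro j _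
        apply Finset.sum_congr rfl; intro l _
        exact e0 j l
    _ = ∑ j, ∑ a, ∑ l, S a a * (Z j l * (U j a * V l a)) := by
        apply Finset.sum_congr rfl; intro j _; exact Finset.sum_comm
    _ = ∑ a, ∑ j, ∑ l, S a a * (Z j l * (U j a * V l a)) := Finset.sum_comm
    _ = ∑ a, S a a * (∑ j, ∑ l, Z j l * (U j a * V l a)) := by
        apply Finset.sum_congr rfl; intro a _
        rw [Finset.mul_sum]
        apply Finset.sum_congr rfl; intro j _
        exact (Finset.mul_sum _ _ _).symm

lemma nuclear_le_sumS {n r : ℕ} (U V : Matrix (Fin n) (Fin r) ℝ) (S : Matrix (Fin r) (Fin r) ℝ)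
    (hU : Uᵀ * U = 1) (hV : Vᵀ * V = 1) (hSdiag : ∀ i j, i ≠ j → S i j = 0)
    (hSnn : ∀ i, 0 ≤ S i i) :
    nuclearNorm (U * S * Vᵀ) ≤ ∑ a, S a a := by
  obtain ⟨Z, hZspec, hZip⟩ := exists_dual (U * S * Vᵀ)
  rw [← hZip, ip_rearrange Z U V S hSdiag]
  calc ∑ a, S a a * (∑ j, ∑ l, Z j l * (U j a * V l a))
      ≤ ∑ a, S a a * 1 := by
        apply Finset.sum_le_sum; intro a _
        apply mul_le_mul_of_nonneg_left _ (hSnn a)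
        exact pair_bound Z hZspec (fun j => U j a) (fun l => V l a)
          (le_of_eq (sum_col_sq_eq_one U hU a)) (le_of_eq (sum_col_sq_eq_one V hV a))
    _ = ∑ a, S a a := by simp

lemma ip_UV_USVt {n r : ℕ} (U V : Matrix (Fin n) (Fin r) ℝ) (S : Matrix (Fin r) (Fin r) ℝ)
    (hU : Uᵀ * U = 1) (hV : Vᵀ * V = 1) :
    ip (U * Vᵀ) (U * S * Vᵀ) = ∑ a, S a a := by
  rw [ip_eq_trace, Matrix.transpose_mul, Matrix.transpose_transpose]
  have h1 : V * Uᵀ * (U * S * Vᵀ) = V * (S * Vᵀ) := by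
    rw [Matrix.mul_assoc V Uᵀ _, ← Matrix.mul_assoc Uᵀ (U * S) Vᵀ, ← Matrix.mul_assoc Uᵀ U S,
      hU, Matrix.one_mul]
  rw [h1, Matrix.trace_mul_comm, Matrix.mul_assoc, hV, Matrix.mul_one]
  simp [Matrix.trace, Matrix.diag]


/-- Proposition 2: subgradient optimality condition.
If p ≥ 1/n, ‖P_T R_Ω P_T − P_T‖_op ≤ 1/2, and there is a dual certificate Y with
P_Ω(Y) = Y, ‖P_{T⊥}(Y)‖ ≤ 1/2, and ‖P_T(Y) − UVᵀ‖_F ≤ 1/(4n), then M is the unique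
optimal solution of nuclear norm minimization over matrices agreeing with M on Ω. -/
theorem statement4 (n r : ℕ) (M : Matrix (Fin n) (Fin n) ℝ)
    (U V : Matrix (Fin n) (Fin r) ℝ) (S : Matrix (Fin r) (Fin r) ℝ)
    (Ω : Set (Fin n × Fin n)) (p : ℝ)
    -- reduced SVD of M with rank r
    (hU : Uᵀ * U = 1) (hV : Vᵀ * V = 1)
    (hSdiag : ∀ i j, i ≠ j → S i j = 0) (hSpos : ∀ i, 0 < S i i)
    (hM : M = U * S * Vᵀ)
    (hp : 1 / (n : ℝ) ≤ p)
    -- condition (1): ‖P_T R_Ω P_T − P_T‖_op ≤ 1/2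
    (hop : opNormMap
      (fun Z => projT U V (p⁻¹ • projS Ω (projT U V Z)) - projT U V Z) ≤ 1 / 2)
    -- condition (2): existence of a dual certificate
    (hY : ∃ Y : Matrix (Fin n) (Fin n) ℝ, projS Ω Y = Y ∧
      specNorm (Y - projT U V Y) ≤ 1 / 2 ∧
      frobNorm (projT U V Y - U * Vᵀ) ≤ 1 / (4 * n)) :
    ∀ X : Matrix (Fin n) (Fin n) ℝ,
      (∀ i j, (i, j) ∈ Ω → X i j = M i j) → X ≠ M →
      nuclearNorm M < nuclearNorm X := by
  intro X hX hXM
  -- dispose of n = 0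
  rcases Nat.eq_zero_or_pos n with hn0 | hnpos
  · exfalso; apply hXM; subst hn0; funext i j; exact i.elim0
  have hN1 : (1 : ℝ) ≤ (n : ℝ) := by exact_mod_cast hnpos
  have hNpos : (0 : ℝ) < (n : ℝ) := by linarith
  have hp0 : 0 < p := lt_of_lt_of_le (by positivity) hp
  have hpinv : p⁻¹ ≤ (n : ℝ) := by
    have h1 : (0 : ℝ) < 1 / (n : ℝ) := by positivity
    have := inv_anti₀ h1 hp
    rwa [one_div, inv_inv] at this
  -- set up Δ, G, E
  set Δ : Matrix (Fin n) (Fin n) ℝ := X - M with hΔdef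
  have hΔ0 : Δ ≠ 0 := fun h => hXM (by rw [← sub_eq_zero]; exact h)
  have hΔΩ : ∀ i j, (i, j) ∈ Ω → Δ i j = 0 := by
    intro i j hij
    rw [hΔdef, Matrix.sub_apply, hX i j hij, sub_self]
  set G : Matrix (Fin n) (Fin n) ℝ := projT U V Δ with hGdef
  set E : Matrix (Fin n) (Fin n) ℝ := Δ - G with hEdef
  have hPTG : projT U V G = G := projT_idem U V hU hV Δ
  have hPTE : projT U V E = 0 := by
    rw [hEdef, projT_sub, hPTG, hGdef, sub_self]
  have hΔGE : Δ = G + E := by rw [hEdef]; abel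
  -- dual certificates
  obtain ⟨Y, hYproj, hYspec, hYfrob⟩ := hY
  obtain ⟨W0, hW0spec, hW0ip⟩ := exists_dual E
  set W : Matrix (Fin n) (Fin n) ℝ := (1 - U * Uᵀ) * W0 * (1 - V * Vᵀ) with hWdef
  -- nuclear norm lower bound via the dual element U Vᵀ + W
  have hspecZ : specNorm (U * Vᵀ + W) ≤ 1 := spec_UV_add_W U V hU hV W0 hW0spec
  have hnucX : ip (U * Vᵀ + W) X ≤ nuclearNorm X := by
    have := ip_le_mul_nuclear (U * Vᵀ + W) X hspecZ
    rwa [one_mul] at this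
  -- decompose the pairing
  have hXMD : X = M + Δ := by rw [hΔdef]; abel
  have hsplit : ip (U * Vᵀ + W) X
      = ip (U * Vᵀ) M + ip W M + (ip (U * Vᵀ) Δ + ip W Δ) := by
    rw [hXMD, ip_add_right, ip_add_left, ip_add_left]
  -- pieces
  have hipWM : ip W M = 0 := by
    rw [hWdef, ip_W_generic]
    have h0 : (1 - U * Uᵀ) * M = 0 := by
      rw [hM, Matrix.sub_mul, Matrix.one_mul]
      have h2 : U * Uᵀ * (U * S) = U * S := by
        rw [Matrix.mul_assoc U Uᵀ (U * S), ← Matrix.mul_assoc Uᵀ U S, hU, Matrix.one_mul]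
      have h3 : U * Uᵀ * (U * S * Vᵀ) = U * S * Vᵀ := by
        rw [← Matrix.mul_assoc (U * Uᵀ) (U * S) Vᵀ, h2]
      rw [h3, sub_self]
    rw [h0, Matrix.zero_mul, ip_zero_right]
  have hipUVM : ip (U * Vᵀ) M = ∑ a, S a a := by rw [hM]; exact ip_UV_USVt U V S hU hV
  have hnucM : nuclearNorm M ≤ ∑ a, S a a := by
    rw [hM]
    exact nuclear_le_sumS U V S hU hV hSdiag (fun i => le_of_lt (hSpos i))
  have hipWΔ : ip W Δ = nuclearNorm E := by
    rw [hWdef, ip_W_generic, ← projT_perp_eq U V Δ, ← hGdef, ← hEdef, hW0ip]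
  -- the UVᵀ pairing with Δ
  have hipYΔ : ip Y Δ = 0 := by
    rw [← hYproj, ip_projS_symm, projS_zero_of_vanish Ω Δ hΔΩ, ip_zero_right]
  have hipPerpYΔ : ip (Y - projT U V Y) Δ = ip (Y - projT U V Y) E := by
    have h1 : ip (Y - projT U V Y) Δ = ip Y Δ - ip Y G := by
      rw [ip_sub_left, ip_projT_symm, hGdef]
    have h2 : ip (Y - projT U V Y) E = ip Y E - ip Y (projT U V E) := by
      rw [ip_sub_left, ip_projT_symm]
    rw [h1, h2, hPTE, ip_zero_right, sub_zero, hEdef, ip_sub_right Y Δ G]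
  have hPerpYbound : |ip (Y - projT U V Y) E| ≤ (1 / 2) * nuclearNorm E := by
    have hub := ip_le_mul_nuclear (Y - projT U V Y) E hYspec
    have hlb := ip_le_mul_nuclear (-(Y - projT U V Y)) E (c := 1 / 2)
      (by rw [specNorm_neg]; exact hYspec)
    rw [ip_neg_left] at hlb
    rw [abs_le]
    constructor <;> linarith
  have hipDG : ip (U * Vᵀ - projT U V Y) Δ = ip (U * Vᵀ - projT U V Y) G := by
    have hfix : projT U V (U * Vᵀ - projT U V Y) = U * Vᵀ - projT U V Y := by
      rw [projT_sub, projT_fix_UV U V hU, projT_idem U V hU hV]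
    calc ip (U * Vᵀ - projT U V Y) Δ
        = ip (projT U V (U * Vᵀ - projT U V Y)) Δ := by rw [hfix]
      _ = ip (U * Vᵀ - projT U V Y) (projT U V Δ) := ip_projT_symm U V _ _
      _ = ip (U * Vᵀ - projT U V Y) G := by rw [← hGdef]
  have hDGbound : |ip (U * Vᵀ - projT U V Y) G| ≤ (1 / (4 * n)) * frobNorm G := by
    have h1 := abs_ip_le (U * Vᵀ - projT U V Y) G
    have h2 : frobNorm (U * Vᵀ - projT U V Y) = frobNorm (projT U V Y - U * Vᵀ) := by
      rw [show U * Vᵀ - projT U V Y = -(projT U V Y - U * Vᵀ) by abel, frob_neg]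
    rw [h2] at h1
    calc |ip (U * Vᵀ - projT U V Y) G|
        ≤ frobNorm (projT U V Y - U * Vᵀ) * frobNorm G := h1
      _ ≤ (1 / (4 * n)) * frobNorm G :=
          mul_le_mul_of_nonneg_right hYfrob (frob_nonneg G)
  have hUVdecomp : ip (U * Vᵀ) Δ
      = ip (U * Vᵀ - projT U V Y) Δ - ip (Y - projT U V Y) Δ + ip Y Δ := by
    rw [ip_sub_left, ip_sub_left]
    ring
  -- condition (1): bound on frobNorm G
  set A : Matrix (Fin n) (Fin n) ℝ → Matrix (Fin n) (Fin n) ℝ :=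
    fun Z => projT U V (p⁻¹ • projS Ω (projT U V Z)) - projT U V Z with hAdef
  have hhom : ∀ (c : ℝ), 0 ≤ c → ∀ Z, A (c • Z) = c • A Z := by
    intro c _ Z
    simp only [hAdef]
    rw [projT_smul U V c Z, projS_smul Ω c (projT U V Z), smul_comm p⁻¹ c,
      projT_smul U V c (p⁻¹ • projS Ω (projT U V Z)), smul_sub]
  have hC : ∀ Z, frobNorm Z ≤ 1 → frobNorm (A Z) ≤ |p⁻¹| + 1 := by
    intro Z hZ
    simp only [hAdef]
    calc frobNorm (projT U V (p⁻¹ • projS Ω (projT U V Z)) - projT U V Z)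
        ≤ frobNorm (projT U V (p⁻¹ • projS Ω (projT U V Z))) + frobNorm (projT U V Z) :=
          frob_sub_le _ _
      _ ≤ |p⁻¹| * frobNorm Z + frobNorm Z := by
          apply add_le_add
          · calc frobNorm (projT U V (p⁻¹ • projS Ω (projT U V Z)))
                ≤ frobNorm (p⁻¹ • projS Ω (projT U V Z)) := frob_projT_le U V hU hV _
              _ = |p⁻¹| * frobNorm (projS Ω (projT U V Z)) := frob_smul _ _
              _ ≤ |p⁻¹| * frobNorm (projT U V Z) :=
                  mul_le_mul_of_nonneg_left (frob_projS_le _ _) (abs_nonneg _)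
              _ ≤ |p⁻¹| * frobNorm Z :=
                  mul_le_mul_of_nonneg_left (frob_projT_le U V hU hV Z) (abs_nonneg _)
          · exact frob_projT_le U V hU hV Z
      _ ≤ |p⁻¹| * 1 + 1 := by
          apply add_le_add _ hZ
          exact mul_le_mul_of_nonneg_left hZ (abs_nonneg _)
      _ = |p⁻¹| + 1 := by ring
  have happ : frobNorm (A G) ≤ (1 / 2) * frobNorm G :=
    opNormMap_apply_le hop hhom hC G
  -- compute ip G (A G)
  have hipGAG : ip G (A G) = p⁻¹ * frobNorm (projS Ω G) ^ 2 - frobNorm G ^ 2 := by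
    simp only [hAdef]
    rw [hPTG, ip_sub_right]
    have h1 : ip G (projT U V (p⁻¹ • projS Ω G)) = ip G (p⁻¹ • projS Ω G) := by
      rw [ip_comm, ip_projT_symm, hPTG, ip_comm]
    rw [h1, ip_smul_right, ip_projS_self, ← frob_sq, ← frob_sq]
  have hAGbound : |ip G (A G)| ≤ frobNorm G * ((1 / 2) * frobNorm G) := by
    calc |ip G (A G)| ≤ frobNorm G * frobNorm (A G) := abs_ip_le G (A G)
      _ ≤ frobNorm G * ((1 / 2) * frobNorm G) :=
          mul_le_mul_of_nonneg_left happ (frob_nonneg G)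
  have hG2 : frobNorm G ^ 2 ≤ 2 * p⁻¹ * frobNorm (projS Ω G) ^ 2 := by
    have h1 : -(frobNorm G * ((1 / 2) * frobNorm G)) ≤ ip G (A G) := by
      have := abs_le.mp hAGbound
      linarith [this.1]
    rw [hipGAG] at h1
    nlinarith [frob_nonneg G]
  -- projS G = - projS E
  have hprojSG : projS Ω G = -projS Ω E := by
    have : G = Δ - E := by rw [hEdef]; abel
    rw [this, projS_sub, projS_zero_of_vanish Ω Δ hΔΩ]
    abel
  have hfPSG : frobNorm (projS Ω G) = frobNorm (projS Ω E) := by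
    rw [hprojSG, frob_neg]
  have hfPSE : frobNorm (projS Ω E) ≤ nuclearNorm E :=
    le_trans (frob_projS_le Ω E) (frob_le_nuclear E)
  -- main chain
  set ν : ℝ := nuclearNorm E with hνdef
  have hν0 : 0 ≤ ν := nuclearNorm_nonneg E
  have hGν : frobNorm G ^ 2 ≤ 2 * (n : ℝ) * ν ^ 2 := by
    have h1 : frobNorm (projS Ω G) ^ 2 ≤ ν ^ 2 := by
      rw [hfPSG]
      exact pow_le_pow_left₀ (frob_nonneg (projS Ω E)) hfPSE 2
    have h2 : 2 * p⁻¹ * frobNorm (projS Ω G) ^ 2 ≤ 2 * (n : ℝ) * ν ^ 2 := by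
      have hpi : 0 ≤ p⁻¹ := le_of_lt (inv_pos.mpr hp0)
      have h3 : p⁻¹ * frobNorm (projS Ω G) ^ 2 ≤ (n : ℝ) * ν ^ 2 := by
        calc p⁻¹ * frobNorm (projS Ω G) ^ 2 ≤ (n : ℝ) * frobNorm (projS Ω G) ^ 2 :=
              mul_le_mul_of_nonneg_right hpinv (sq_nonneg _)
          _ ≤ (n : ℝ) * ν ^ 2 := mul_le_mul_of_nonneg_left h1 (le_of_lt hNpos)
      linarith
    linarith
  have hmain : nuclearNorm M + ((1 / 2) * ν - (1 / (4 * n)) * frobNorm G) ≤ nuclearNorm X := by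
    have e1 : ip (U * Vᵀ + W) X = (∑ a, S a a) + 0
        + ((ip (U * Vᵀ - projT U V Y) G - ip (Y - projT U V Y) E + 0) + ν) := by
      rw [hsplit, hipUVM, hipWM, hipWΔ, hUVdecomp, hipYΔ, hipPerpYΔ, hipDG, hνdef]
    have e2 : -( (1 / (4 * n)) * frobNorm G) ≤ ip (U * Vᵀ - projT U V Y) G := by
      have := abs_le.mp hDGbound
      linarith [this.1]
    have e3 : ip (Y - projT U V Y) E ≤ (1 / 2) * ν := by
      have := abs_le.mp hPerpYbound
      exact this.2
    have e4 : (∑ a, S a a) + ((1 / 2) * ν - (1 / (4 * n)) * frobNorm G)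
        ≤ ip (U * Vᵀ + W) X := by
      rw [e1]
      linarith
    linarith [hnucM, hnucX]
  -- conclude
  rcases eq_or_lt_of_le hν0 with hνz | hνpos
  · exfalso
    have hE0 : E = 0 := by
      apply frob_eq_zero
      have h1 : frobNorm E ≤ ν := frob_le_nuclear E
      have h2 := frob_nonneg E
      rw [← hνz] at h1
      linarith
    have h1 : frobNorm (projS Ω G) = 0 := by
      rw [hfPSG, hE0]
      have h0 : projS Ω (0 : Matrix (Fin n) (Fin n) ℝ) = 0 :=
        projS_zero_of_vanish Ω 0 (fun i j _ => rfl)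
      rw [h0, frob_zero]
    have h3 : frobNorm G ^ 2 ≤ 0 := by
      have h4 := hG2
      rw [h1] at h4
      simpa using h4
    have h4 : frobNorm G = 0 := by
      have h5 : frobNorm G ^ 2 = 0 := le_antisymm h3 (sq_nonneg _)
      exact pow_eq_zero_iff (by norm_num : (2:ℕ) ≠ 0) |>.mp h5
    have hG0 : G = 0 := frob_eq_zero h4
    apply hΔ0
    rw [hΔGE, hG0, hE0, add_zero]
  · have hfG : frobNorm G ≤ Real.sqrt (2 * n) * ν := by
      have h1 : frobNorm G ^ 2 ≤ (Real.sqrt (2 * n) * ν) ^ 2 := by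
        rw [mul_pow, Real.sq_sqrt (by positivity : (0:ℝ) ≤ 2 * n)]
        exact hGν
      calc frobNorm G = Real.sqrt (frobNorm G ^ 2) := (Real.sqrt_sq (frob_nonneg G)).symm
        _ ≤ Real.sqrt ((Real.sqrt (2 * n) * ν) ^ 2) := Real.sqrt_le_sqrt h1
        _ = Real.sqrt (2 * n) * ν := Real.sqrt_sq (mul_nonneg (Real.sqrt_nonneg _) hν0)
    have hslt : Real.sqrt (2 * n) < 2 * n := by
      have hb : (0:ℝ) < 2 * n := by positivity
      have hb1 : (1:ℝ) < 2 * n := by linarith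
      have hlt : (2 * (n:ℝ)) < (2 * n) ^ 2 := by
        rw [sq]
        exact (lt_mul_iff_one_lt_left hb).mpr hb1
      have h6 := Real.sqrt_lt_sqrt (by positivity : (0:ℝ) ≤ 2 * n) hlt
      rwa [Real.sqrt_sq (by positivity : (0:ℝ) ≤ 2 * n)] at h6
    have hfG2 : frobNorm G < 2 * n * ν := by
      calc frobNorm G ≤ Real.sqrt (2 * n) * ν := hfG
        _ < 2 * n * ν := mul_lt_mul_of_pos_right hslt hνpos
    have hkey : (1 / (4 * n)) * frobNorm G < (1 / 2) * ν := by
      rw [div_mul_eq_mul_div, one_mul, div_lt_iff₀ (by positivity : (0:ℝ) < 4 * n)]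
      calc frobNorm G < 2 * n * ν := hfG2
        _ = 1 / 2 * ν * (4 * n) := by ring
    have h7 : 0 < (1 / 2) * ν - (1 / (4 * n)) * frobNorm G := sub_pos.mpr hkey
    calc nuclearNorm M < nuclearNorm M + ((1 / 2) * ν - (1 / (4 * n)) * frobNorm G) :=
          lt_add_of_pos_right _ h7
      _ ≤ nuclearNorm X := hmain


end
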